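/- Let θ > d/2 and t ∈ ℝ. For functions φ, ϕ ∈ L²(ℤ^d × ℝ^d) and ψ : ℤ^d → ℂ with ⟨k⟩^θ ψ ∈ L²(ℤ^d), one has |∑_{k,ℓ∈ℤ^d} ∫_{ℝ^d} φ(k,η) ψ(ℓ) ϕ(k−ℓ, η−ℓt) dη| ≤ C ‖φ‖_{L²_{k,η}} ‖⟨k⟩^θ ψ‖_{L²_k} ‖ϕ‖_{L²_{k,η}}, with C depending only on θ and d. -/

import Mathlib

open MeasureTheory

/-- The bracket `⟨k⟩ = √(1+|k|²)` for `k ∈ ℤ^d`. -/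
noncomputable def brk (d : ℕ) (k : Fin d → ℤ) : ℝ :=
  Real.sqrt (1 + ∑ i, ((k i : ℝ)) ^ 2)

/-- A vector of `ℤ^d` viewed in `ℝ^d`. -/
noncomputable def toE (d : ℕ) (k : Fin d → ℤ) : EuclideanSpace ℝ (Fin d) :=
  WithLp.toLp 2 (fun i => (k i : ℝ))

private lemma rpow_sq_aux {x : ℝ} (hx : 0 < x) (r : ℝ) :
    (x ^ r) ^ (2 : ℕ) = x ^ (2 * r) := by
  rw [← Real.rpow_natCast (x ^ r) 2, ← Real.rpow_mul hx.le]
  congr 1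
  push_cast
  ring

/-- Cauchy-Schwarz for infinite sums of nonnegative reals. -/
private lemma cs_tsum {ι : Type*} {f g : ι → ℝ} (hf0 : ∀ i, 0 ≤ f i) (hg0 : ∀ i, 0 ≤ g i)
    (hf : Summable (fun i => f i ^ 2)) (hg : Summable (fun i => g i ^ 2)) :
    Summable (fun i => f i * g i) ∧
      ∑' i, f i * g i ≤ Real.sqrt (∑' i, f i ^ 2) * Real.sqrt (∑' i, g i ^ 2) := by
  have hsum : Summable (fun i => f i * g i) := by
    refine Summable.of_nonneg_of_le (fun i => mul_nonneg (hf0 i) (hg0 i)) (fun i => ?_)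
      ((hf.add hg).div_const 2)
    nlinarith [sq_nonneg (f i - g i)]
  refine ⟨hsum, Summable.tsum_le_of_sum_le hsum fun s => ?_⟩
  have h1 : (∑ i ∈ s, f i * g i) ^ 2 ≤ (∑ i ∈ s, f i ^ 2) * ∑ i ∈ s, g i ^ 2 :=
    Finset.sum_mul_sq_le_sq_mul_sq s f g
  have h0 : 0 ≤ ∑ i ∈ s, f i * g i :=
    Finset.sum_nonneg fun i _ => mul_nonneg (hf0 i) (hg0 i)
  calc ∑ i ∈ s, f i * g i
      = Real.sqrt ((∑ i ∈ s, f i * g i) ^ 2) := (Real.sqrt_sq h0).symm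
    _ ≤ Real.sqrt ((∑ i ∈ s, f i ^ 2) * ∑ i ∈ s, g i ^ 2) := Real.sqrt_le_sqrt h1
    _ = Real.sqrt (∑ i ∈ s, f i ^ 2) * Real.sqrt (∑ i ∈ s, g i ^ 2) :=
        Real.sqrt_mul (Finset.sum_nonneg fun i _ => sq_nonneg _) _
    _ ≤ Real.sqrt (∑' i, f i ^ 2) * Real.sqrt (∑' i, g i ^ 2) := by
        apply mul_le_mul
        · exact Real.sqrt_le_sqrt (Summable.sum_le_tsum s (fun i _ => sq_nonneg _) hf)
        · exact Real.sqrt_le_sqrt (Summable.sum_le_tsum s (fun i _ => sq_nonneg _) hg)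
        · exact Real.sqrt_nonneg _
        · exact Real.sqrt_nonneg _

private lemma summable_int_aux {s : ℝ} (hs : 1 / 2 < s) :
    Summable (fun n : ℤ => (1 + (n : ℝ) ^ 2) ^ (-s)) := by
  have hnat : Summable (fun n : ℕ => (1 + (n : ℝ) ^ 2) ^ (-s)) := by
    rw [← summable_nat_add_iff 1]
    have hmaj : Summable (fun n : ℕ => ((n : ℝ) + 1) ^ (-(2 * s))) := by
      have := (summable_nat_add_iff (f := fun n : ℕ => (n : ℝ) ^ (-(2 * s))) 1).mpr
        (Real.summable_nat_rpow.mpr (by linarith))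
      refine this.congr fun n => ?_
      push_cast
      ring_nf
    refine Summable.of_nonneg_of_le
      (fun n => Real.rpow_nonneg (by positivity : (0:ℝ) ≤ 1 + ((n + 1 : ℕ) : ℝ) ^ 2) _)
      (fun n => ?_) hmaj
    have hx : (0 : ℝ) < (n : ℝ) + 1 := by positivity
    have h1 : ((n : ℝ) + 1) ^ (-(2 * s)) = (((n : ℝ) + 1) ^ (2 : ℕ)) ^ (-s) := by
      rw [← Real.rpow_natCast ((n : ℝ) + 1) 2, ← Real.rpow_mul hx.le]
      congr 1
      push_cast
      ring
    rw [h1]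
    refine Real.rpow_le_rpow_of_nonpos (by positivity) ?_ (by linarith)
    push_cast
    nlinarith [sq_nonneg ((n : ℝ) + 1)]
  refine Summable.of_nat_of_neg hnat ?_
  refine hnat.congr fun n => ?_
  push_cast
  ring_nf

private lemma summable_pi_int {g : ℤ → ℝ} (hg0 : ∀ n, 0 ≤ g n) (hg : Summable g) :
    ∀ d : ℕ, Summable (fun ℓ : Fin d → ℤ => ∏ i, g (ℓ i)) := by
  intro d
  induction d with
  | zero =>
    have h : (fun ℓ : Fin 0 → ℤ => ∏ i, g (ℓ i)) = fun _ => 1 := by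
      funext ℓ; simp
    rw [h]
    haveI : Unique (Fin 0 → ℤ) := ⟨⟨fun i => i.elim0⟩, fun f => funext fun i => i.elim0⟩
    haveI : Finite (Fin 0 → ℤ) := Finite.of_subsingleton
    exact Summable.of_finite
  | succ n ih =>
    have hg0' : 0 ≤ g := hg0
    have hih0 : 0 ≤ fun ℓ : Fin n → ℤ => ∏ i, g (ℓ i) :=
      fun ℓ => Finset.prod_nonneg fun i _ => hg0 _
    have hprod : Summable (fun p : ℤ × (Fin n → ℤ) => g p.1 * ∏ i, g (p.2 i)) :=
      Summable.mul_of_nonneg (f := g) (g := fun ℓ : Fin n → ℤ => ∏ i, g (ℓ i))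
        hg ih hg0' hih0
    rw [← (Fin.consEquiv (fun _ : Fin (n + 1) => ℤ)).summable_iff]
    refine hprod.congr fun p => ?_
    simp [Fin.consEquiv, Fin.prod_univ_succ]

private lemma one_le_brk (d : ℕ) (ℓ : Fin d → ℤ) : 1 ≤ brk d ℓ := by
  have h0 : (0:ℝ) ≤ ∑ i, ((ℓ i : ℝ)) ^ 2 := Finset.sum_nonneg fun i _ => sq_nonneg _
  rw [brk]
  calc (1:ℝ) = Real.sqrt 1 := by simp
    _ ≤ Real.sqrt (1 + ∑ i, ((ℓ i : ℝ)) ^ 2) := Real.sqrt_le_sqrt (by linarith)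

private lemma brk_pos (d : ℕ) (ℓ : Fin d → ℤ) : 0 < brk d ℓ :=
  lt_of_lt_of_le one_pos (one_le_brk d ℓ)

private lemma summable_brk {d : ℕ} (hd : 1 ≤ d) {θ : ℝ} (hθ : (d : ℝ) / 2 < θ) :
    Summable (fun ℓ : Fin d → ℤ => brk d ℓ ^ (-(2 * θ))) := by
  have hd0 : (0 : ℝ) < d := by exact_mod_cast hd
  have hs : 1 / 2 < θ / d := by
    rw [lt_div_iff₀ hd0]; linarith
  have h1 := summable_int_aux hs
  have h2 := summable_pi_int
    (fun n => Real.rpow_nonneg (by positivity : (0:ℝ) ≤ 1 + ((n:ℤ) : ℝ) ^ 2) _) h1 d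
  refine Summable.of_nonneg_of_le
    (fun ℓ => Real.rpow_nonneg (Real.sqrt_nonneg _) _) (fun ℓ => ?_) h2
  set Q : ℝ := 1 + ∑ i, ((ℓ i : ℝ)) ^ 2 with hQdef
  have hsums : (0:ℝ) ≤ ∑ i, ((ℓ i : ℝ)) ^ 2 := Finset.sum_nonneg fun i _ => sq_nonneg _
  have hQ1 : (1 : ℝ) ≤ Q := by rw [hQdef]; linarith
  have hQ0 : (0 : ℝ) < Q := lt_of_lt_of_le one_pos hQ1
  have hbrk : brk d ℓ ^ (-(2 * θ)) = Q ^ (-θ) := by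
    rw [brk, Real.sqrt_eq_rpow, ← Real.rpow_mul hQ0.le]
    congr 1
    ring
  rw [hbrk]
  have hQi0 : ∀ i ∈ Finset.univ, (0 : ℝ) ≤ 1 + ((ℓ i : ℝ)) ^ 2 := fun i _ => by positivity
  have hprod : (∏ i, (1 + ((ℓ i : ℝ)) ^ 2) ^ (-(θ / d)))
      = (∏ i, (1 + ((ℓ i : ℝ)) ^ 2)) ^ (-(θ / d)) :=
    Real.finset_prod_rpow _ _ hQi0 _
  rw [hprod]
  have hP0 : (0 : ℝ) < ∏ i, (1 + ((ℓ i : ℝ)) ^ 2) :=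
    Finset.prod_pos fun i _ => by positivity
  have hPQ : (∏ i, (1 + ((ℓ i : ℝ)) ^ 2)) ≤ Q ^ d := by
    calc (∏ i, (1 + ((ℓ i : ℝ)) ^ 2)) ≤ ∏ _i : Fin d, Q := by
          refine Finset.prod_le_prod hQi0 fun i _ => ?_
          have : ((ℓ i : ℝ)) ^ 2 ≤ ∑ j, ((ℓ j : ℝ)) ^ 2 :=
            Finset.single_le_sum (f := fun j => ((ℓ j : ℝ)) ^ 2)
              (fun j _ => sq_nonneg _) (Finset.mem_univ i)
          rw [hQdef]; linarith
      _ = Q ^ d := by rw [Finset.prod_const, Finset.card_univ, Fintype.card_fin]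
  have hkey : (Q ^ d) ^ (-(θ / d)) ≤ (∏ i, (1 + ((ℓ i : ℝ)) ^ 2)) ^ (-(θ / d)) :=
    Real.rpow_le_rpow_of_nonpos hP0 hPQ
      (neg_nonpos_of_nonneg (by positivity))
  refine le_trans (le_of_eq ?_) hkey
  rw [← Real.rpow_natCast Q d, ← Real.rpow_mul hQ0.le]
  congr 1
  field_simp

/-- Trilinear estimate (Lemma 3.1 a) in [BMM13]): for `θ > d/2`,
`|∑_{k,ℓ} ∫ φ(k,η) ψ(ℓ) ϕ(k−ℓ, η−ℓt) dη| ≤ C ‖φ‖_{L²} ‖⟨k⟩^θ ψ‖_{L²} ‖ϕ‖_{L²}`. -/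
theorem trilinear_estimate_low_high (d : ℕ) (hd : 1 ≤ d) (θ : ℝ) (hθ : (d : ℝ) / 2 < θ) :
    ∃ C > 0, ∀ (t : ℝ) (φ ϕ : (Fin d → ℤ) → EuclideanSpace ℝ (Fin d) → ℂ)
      (ψ : (Fin d → ℤ) → ℂ),
      (∀ k, MemLp (φ k) 2 volume) → Summable (fun k => ∫ η, ‖φ k η‖ ^ 2) →
      (∀ k, MemLp (ϕ k) 2 volume) → Summable (fun k => ∫ η, ‖ϕ k η‖ ^ 2) →
      Summable (fun ℓ => brk d ℓ ^ (2 * θ) * ‖ψ ℓ‖ ^ 2) →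
      ‖∑' k : Fin d → ℤ, ∑' ℓ : Fin d → ℤ,
          ∫ η, φ k η * ψ ℓ * ϕ (k - ℓ) (η - t • toE d ℓ)‖ ≤
        C * Real.sqrt (∑' k : Fin d → ℤ, ∫ η, ‖φ k η‖ ^ 2) *
          Real.sqrt (∑' ℓ : Fin d → ℤ, brk d ℓ ^ (2 * θ) * ‖ψ ℓ‖ ^ 2) *
          Real.sqrt (∑' k : Fin d → ℤ, ∫ η, ‖ϕ k η‖ ^ 2) := by
  classical
  have hS : Summable (fun ℓ : Fin d → ℤ => brk d ℓ ^ (-(2 * θ))) := summable_brk hd hθ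
  set S : ℝ := ∑' ℓ : Fin d → ℤ, brk d ℓ ^ (-(2 * θ)) with hSdef
  have hS1 : (1 : ℝ) ≤ S := by
    have h0 : brk d (0 : Fin d → ℤ) ^ (-(2 * θ)) = 1 := by
      have : brk d (0 : Fin d → ℤ) = 1 := by simp [brk]
      rw [this, Real.one_rpow]
    calc (1 : ℝ) = brk d (0 : Fin d → ℤ) ^ (-(2 * θ)) := h0.symm
      _ ≤ S := Summable.le_tsum hS 0 fun ℓ _ => Real.rpow_nonneg (Real.sqrt_nonneg _) _
  refine ⟨Real.sqrt S, Real.sqrt_pos.mpr (by linarith), ?_⟩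
  intro t φ ϕ ψ hφm hφs hϕm hϕs hψs
  set na : (Fin d → ℤ) → ℝ := fun k => Real.sqrt (∫ η, ‖φ k η‖ ^ 2) with hna
  set nc : (Fin d → ℤ) → ℝ := fun m => Real.sqrt (∫ η, ‖ϕ m η‖ ^ 2) with hnc
  set nb : (Fin d → ℤ) → ℝ := fun ℓ => ‖ψ ℓ‖ with hnb
  have hna2 : ∀ k, na k ^ 2 = ∫ η, ‖φ k η‖ ^ 2 := fun k =>
    Real.sq_sqrt (integral_nonneg fun η => by positivity)
  have hnc2 : ∀ m, nc m ^ 2 = ∫ η, ‖ϕ m η‖ ^ 2 := fun m =>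
    Real.sq_sqrt (integral_nonneg fun η => by positivity)
  have hna0 : ∀ k, 0 ≤ na k := fun k => Real.sqrt_nonneg _
  have hnc0 : ∀ m, 0 ≤ nc m := fun m => Real.sqrt_nonneg _
  have hnb0 : ∀ ℓ, 0 ≤ nb ℓ := fun ℓ => norm_nonneg _
  have hnaS : Summable (fun k => na k ^ 2) := hφs.congr fun k => (hna2 k).symm
  have hncS : Summable (fun m => nc m ^ 2) := hϕs.congr fun m => (hnc2 m).symm
  -- the ℓ¹ bound on ψ via Cauchy-Schwarz with the bracket weights
  have hbrk_pos : ∀ ℓ : Fin d → ℤ, (0:ℝ) < brk d ℓ := brk_pos d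
  have hf2eq : ∀ ℓ : Fin d → ℤ, (brk d ℓ ^ (-θ)) ^ (2:ℕ) = brk d ℓ ^ (-(2 * θ)) := by
    intro ℓ
    rw [rpow_sq_aux (hbrk_pos ℓ)]
    congr 1
    ring
  have hg2eq : ∀ ℓ : Fin d → ℤ, (brk d ℓ ^ θ * nb ℓ) ^ (2:ℕ)
      = brk d ℓ ^ (2 * θ) * ‖ψ ℓ‖ ^ 2 := by
    intro ℓ
    rw [mul_pow, rpow_sq_aux (hbrk_pos ℓ)]
  have hf2 : Summable (fun ℓ : Fin d → ℤ => (brk d ℓ ^ (-θ)) ^ 2) :=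
    hS.congr fun ℓ => (hf2eq ℓ).symm
  have hg2 : Summable (fun ℓ : Fin d → ℤ => (brk d ℓ ^ θ * nb ℓ) ^ 2) :=
    hψs.congr fun ℓ => (hg2eq ℓ).symm
  have hfg : ∀ ℓ : Fin d → ℤ, brk d ℓ ^ (-θ) * (brk d ℓ ^ θ * nb ℓ) = nb ℓ := by
    intro ℓ
    rw [← mul_assoc, ← Real.rpow_add (hbrk_pos ℓ)]
    simp
  obtain ⟨hbSummable, hbBound⟩ := cs_tsum
    (f := fun ℓ : Fin d → ℤ => brk d ℓ ^ (-θ)) (g := fun ℓ : Fin d → ℤ => brk d ℓ ^ θ * nb ℓ)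
    (fun ℓ => Real.rpow_nonneg (hbrk_pos ℓ).le _)
    (fun ℓ => mul_nonneg (Real.rpow_nonneg (hbrk_pos ℓ).le _) (hnb0 ℓ))
    hf2 hg2
  have hbS : Summable nb := hbSummable.congr hfg
  have hbBound' : ∑' ℓ : Fin d → ℤ, nb ℓ ≤
      Real.sqrt S * Real.sqrt (∑' ℓ : Fin d → ℤ, brk d ℓ ^ (2 * θ) * ‖ψ ℓ‖ ^ 2) := by
    have h := hbBound
    rw [tsum_congr hfg, tsum_congr hf2eq, tsum_congr hg2eq] at h
    exact h
  -- pointwise Cauchy-Schwarz in η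
  have key : ∀ k ℓ : Fin d → ℤ, ‖∫ η, φ k η * ψ ℓ * ϕ (k - ℓ) (η - t • toE d ℓ)‖ ≤
      nb ℓ * (na k * nc (k - ℓ)) := by
    intro k ℓ
    set v := t • toE d ℓ with hv
    have hX : MemLp (fun η : EuclideanSpace ℝ (Fin d) => ϕ (k - ℓ) (η - v)) 2 volume :=
      (hϕm (k - ℓ)).comp_measurePreserving (measurePreserving_sub_right volume v)
    have hrw : (∫ η, φ k η * ψ ℓ * ϕ (k - ℓ) (η - v))
        = ψ ℓ * ∫ η, φ k η * ϕ (k - ℓ) (η - v) := by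
      rw [← integral_const_mul]
      congr 1; funext η; ring
    rw [hrw, norm_mul]
    refine mul_le_mul_of_nonneg_left ?_ (norm_nonneg _)
    have h22 : (2 : ℝ).HolderConjugate 2 := Real.HolderConjugate.two_two
    calc ‖∫ η, φ k η * ϕ (k - ℓ) (η - v)‖
        ≤ ∫ η, ‖φ k η * ϕ (k - ℓ) (η - v)‖ := norm_integral_le_integral_norm _
      _ = ∫ η, ‖φ k η‖ * ‖ϕ (k - ℓ) (η - v)‖ := by
          refine integral_congr_ae (Filter.Eventually.of_forall fun η => ?_)
          exact norm_mul _ _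
      _ ≤ (∫ η, ‖φ k η‖ ^ (2:ℝ)) ^ (1/(2:ℝ)) *
          (∫ η, ‖ϕ (k - ℓ) (η - v)‖ ^ (2:ℝ)) ^ (1/(2:ℝ)) :=
          integral_mul_norm_le_Lp_mul_Lq h22 (by simpa using hφm k) (by simpa using hX)
      _ = na k * nc (k - ℓ) := by
          have hrpow : ∀ x : ℝ, x ^ (2:ℝ) = x ^ (2:ℕ) := fun x => by
            rw [show (2:ℝ) = ((2:ℕ):ℝ) by norm_num, Real.rpow_natCast]
          have htrans : (∫ η, ‖ϕ (k - ℓ) (η - v)‖ ^ (2:ℕ))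
              = ∫ η, ‖ϕ (k - ℓ) η‖ ^ (2:ℕ) :=
            integral_sub_right_eq_self (fun η => ‖ϕ (k - ℓ) η‖ ^ (2:ℕ)) v
          simp_rw [hrpow]
          rw [htrans, hna, hnc, ← Real.sqrt_eq_rpow, ← Real.sqrt_eq_rpow]
  -- the dominating product sum
  set G' : (Fin d → ℤ) × (Fin d → ℤ) → ℝ :=
    fun q => nb q.1 * (na q.2 * nc (q.2 - q.1)) with hG'
  have hG'0 : 0 ≤ G' := fun q => mul_nonneg (hnb0 _) (mul_nonneg (hna0 _) (hnc0 _))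
  have hinner : ∀ ℓ : Fin d → ℤ, Summable (fun k => na k * nc (k - ℓ)) ∧
      ∑' k, na k * nc (k - ℓ) ≤
        Real.sqrt (∑' k, na k ^ 2) * Real.sqrt (∑' m, nc m ^ 2) := by
    intro ℓ
    have hshift : Summable (fun k : Fin d → ℤ => nc (k - ℓ) ^ 2) := by
      have h := (Equiv.subRight ℓ).summable_iff.mpr hncS
      exact h.congr fun k => rfl
    obtain ⟨h1, h2⟩ := cs_tsum hna0 (fun k => hnc0 (k - ℓ)) hnaS hshift
    refine ⟨h1, h2.trans (le_of_eq ?_)⟩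
    congr 2
    exact (Equiv.subRight ℓ).tsum_eq (fun m => nc m ^ 2)
  set A : ℝ := Real.sqrt (∑' k : Fin d → ℤ, na k ^ 2) with hA
  set Cc : ℝ := Real.sqrt (∑' m : Fin d → ℤ, nc m ^ 2) with hCc
  have hA0 : 0 ≤ A := Real.sqrt_nonneg _
  have hCc0 : 0 ≤ Cc := Real.sqrt_nonneg _
  have hre : ∀ ℓ : Fin d → ℤ, (∑' k : Fin d → ℤ, G' (ℓ, k))
      = nb ℓ * ∑' k : Fin d → ℤ, (na k * nc (k - ℓ)) := by
    intro ℓ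
    rw [show (∑' k : Fin d → ℤ, G' (ℓ, k))
      = ∑' k : Fin d → ℤ, nb ℓ * (na k * nc (k - ℓ)) from tsum_congr fun k => rfl,
      tsum_mul_left]
  have hG'sum : Summable G' := by
    rw [summable_prod_of_nonneg hG'0]
    constructor
    · intro ℓ
      exact (((hinner ℓ).1).mul_left (nb ℓ)).congr fun k => rfl
    · refine Summable.of_nonneg_of_le (fun ℓ => tsum_nonneg fun k => hG'0 (ℓ, k))
        (fun ℓ => ?_) (hbS.mul_right (A * Cc))
      rw [hre ℓ]
      exact mul_le_mul_of_nonneg_left ((hinner ℓ).2) (hnb0 ℓ)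
  set G : (Fin d → ℤ) × (Fin d → ℤ) → ℝ :=
    fun p => nb p.2 * (na p.1 * nc (p.1 - p.2)) with hG
  have hGsum : Summable G := by
    have h := (Equiv.prodComm (Fin d → ℤ) (Fin d → ℤ)).summable_iff.mpr hG'sum
    exact h.congr fun p => rfl
  have hG0 : ∀ p : (Fin d → ℤ) × (Fin d → ℤ), 0 ≤ G p := fun p =>
    mul_nonneg (hnb0 _) (mul_nonneg (hna0 _) (hnc0 _))
  -- summability of the full array
  set F : (Fin d → ℤ) × (Fin d → ℤ) → ℂ := fun p =>
    ∫ η, φ p.1 η * ψ p.2 * ϕ (p.1 - p.2) (η - t • toE d p.2) with hF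
  have hFnormle : ∀ p : (Fin d → ℤ) × (Fin d → ℤ), ‖F p‖ ≤ G p := fun p => key p.1 p.2
  have hFnorm : Summable (fun p => ‖F p‖) :=
    Summable.of_nonneg_of_le (fun p => norm_nonneg _) hFnormle hGsum
  have hFsum : Summable F := Summable.of_norm hFnorm
  -- main computation
  have hLHS : (∑' k : Fin d → ℤ, ∑' ℓ : Fin d → ℤ,
      ∫ η, φ k η * ψ ℓ * ϕ (k - ℓ) (η - t • toE d ℓ)) = ∑' p, F p := (Summable.tsum_prod hFsum).symm
  rw [hLHS]
  calc ‖∑' p, F p‖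
      ≤ ∑' p, ‖F p‖ := norm_tsum_le_tsum_norm hFnorm
    _ ≤ ∑' p, G p := Summable.tsum_le_tsum hFnormle hFnorm hGsum
    _ = ∑' q, G' q :=
        Eq.trans (tsum_congr fun p => rfl) ((Equiv.prodComm (Fin d → ℤ) (Fin d → ℤ)).tsum_eq G')
    _ = ∑' ℓ : Fin d → ℤ, ∑' k : Fin d → ℤ, G' (ℓ, k) := Summable.tsum_prod hG'sum
    _ = ∑' ℓ : Fin d → ℤ, nb ℓ * ∑' k : Fin d → ℤ, (na k * nc (k - ℓ)) :=
        tsum_congr fun ℓ => hre ℓ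
    _ ≤ ∑' ℓ : Fin d → ℤ, nb ℓ * (A * Cc) := by
        refine Summable.tsum_le_tsum (fun ℓ => ?_) ?_ (hbS.mul_right (A * Cc))
        · exact mul_le_mul_of_nonneg_left ((hinner ℓ).2) (hnb0 ℓ)
        · refine Summable.of_nonneg_of_le (fun ℓ => mul_nonneg (hnb0 ℓ)
            (tsum_nonneg fun k => mul_nonneg (hna0 _) (hnc0 _))) (fun ℓ => ?_)
            (hbS.mul_right (A * Cc))
          exact mul_le_mul_of_nonneg_left ((hinner ℓ).2) (hnb0 ℓ)
    _ = (∑' ℓ : Fin d → ℤ, nb ℓ) * (A * Cc) := tsum_mul_right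
    _ ≤ (Real.sqrt S * Real.sqrt (∑' ℓ : Fin d → ℤ, brk d ℓ ^ (2 * θ) * ‖ψ ℓ‖ ^ 2))
        * (A * Cc) := mul_le_mul_of_nonneg_right hbBound' (mul_nonneg hA0 hCc0)
    _ = Real.sqrt S * A *
          Real.sqrt (∑' ℓ : Fin d → ℤ, brk d ℓ ^ (2 * θ) * ‖ψ ℓ‖ ^ 2) * Cc := by ring
    _ = Real.sqrt S * Real.sqrt (∑' k : Fin d → ℤ, ∫ η, ‖φ k η‖ ^ 2) *
          Real.sqrt (∑' ℓ : Fin d → ℤ, brk d ℓ ^ (2 * θ) * ‖ψ ℓ‖ ^ 2) *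
          Real.sqrt (∑' k : Fin d → ℤ, ∫ η, ‖ϕ k η‖ ^ 2) := by
        rw [hA, hCc, tsum_congr hna2, tsum_congr hnc2]
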